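/- Let {I_j : j ∈ ω} be a partition of ω into consecutive finite intervals with |I_j| > j, let n ≤ m with n ≥ 2, let I = I_n ∪ I_{n+1} ∪ ⋯ ∪ I_m, and let T ⊆ 2^I satisfy m(T) < 1/4. Then there exists a sequence ⟨S^k : k ∈ [n,m]⟩ such that: (1) S^k ⊆ I_k for each k ∈ [n,m]; (2) |S^n| ≤ n+1 and |S^k| ≤ (k+1) · ∏_{j=n}^{k-1} 2^{|I_j|} for k ∈ (n,m]; and (3) for every function s with domain [n,m] satisfying s(j) ∈ I_j for each j, if C_s ⊆ T then s(k) ∈ S^k for some k ∈ [n,m], where C_s = {t ∈ 2^I : t(s(j)) = 0 for all j ∈ [n,m]}. -/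

import Mathlib

open Set Filter

/- Partial functions `t : 2^I` on a finite interval `I ⊆ ω` are represented as total
functions `ℕ → Bool` that are `false` off `I`; `m(T) = |T| · 2^{-|I|}` is computed
with `Set.ncard`. -/

open Finset
open scoped Classical
noncomputable section

/-- indicator function of a finset -/
def indik (s : Finset ℕ) : ℕ → Bool := fun i => decide (i ∈ s)

lemma indik_inj : Function.Injective indik := by
  intro s t h
  ext i
  have := congrFun h i
  simpa [indik] using this

/-- all Boolean functions supported on [N, M) -/
def cube (N M : ℕ) : Finset (ℕ → Bool) :=
  (Finset.Ico N M).powerset.image indik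

lemma card_cube (N M : ℕ) : (cube N M).card = 2 ^ (M - N) := by
  rw [cube, Finset.card_image_of_injective _ indik_inj, Finset.card_powerset,
    Nat.card_Ico]

lemma mem_cube {N M : ℕ} {t : ℕ → Bool} :
    t ∈ cube N M ↔ ∀ i, (i < N ∨ M ≤ i) → t i = false := by
  constructor
  · rintro ht i hi
    simp only [cube, Finset.mem_image, Finset.mem_powerset] at ht
    obtain ⟨s, hs, rfl⟩ := ht
    simp only [indik, decide_eq_false_iff_not]
    intro his
    have := hs his
    simp only [Finset.mem_Ico] at this
    omega
  · intro h
    simp only [cube, Finset.mem_image, Finset.mem_powerset]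
    refine ⟨(Finset.Ico N M).filter (fun i => t i = true), Finset.filter_subset _ _, ?_⟩
    funext i
    by_cases hi : N ≤ i ∧ i < M
    · simp only [indik, Finset.mem_filter, Finset.mem_Ico]
      cases h' : t i <;> simp [hi, h']
    · have ht : t i = false := h i (by omega)
      simp [indik, Finset.mem_Ico, ht, fun (h : N ≤ i) => (by omega : ¬ i < M)]

def ors (u v : ℕ → Bool) : ℕ → Bool := fun i => u i || v i

def r1 (K : ℕ) (t : ℕ → Bool) : ℕ → Bool := fun i => t i && decide (i < K)
def r2 (K : ℕ) (t : ℕ → Bool) : ℕ → Bool := fun i => t i && decide (K ≤ i)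

lemma r1_mem {N K M : ℕ} (hK : K ≤ M) {t : ℕ → Bool} (ht : t ∈ cube N M) :
    r1 K t ∈ cube N K := by
  rw [mem_cube] at ht ⊢
  intro i hi
  rcases hi with h | h
  · simp [r1, ht i (Or.inl h)]
  · simp only [r1, Bool.and_eq_false_iff, decide_eq_false_iff_not]; refine Or.inr ?_
    omega

lemma r2_mem {N K M : ℕ} (hN : N ≤ K) {t : ℕ → Bool} (ht : t ∈ cube N M) :
    r2 K t ∈ cube K M := by
  rw [mem_cube] at ht ⊢
  intro i hi
  rcases hi with h | h
  · simp [r2]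
    omega
  · simp [r2, ht i (Or.inr h)]

lemma ors_r1_r2 (K : ℕ) (t : ℕ → Bool) : ors (r1 K t) (r2 K t) = t := by
  funext i
  by_cases h : i < K
  · simp [ors, r1, r2, h, (by omega : ¬ K ≤ i)]
  · simp [ors, r1, r2, h, (by omega : K ≤ i)]

lemma r1_ors {N K M : ℕ} {u v : ℕ → Bool} (hu : u ∈ cube N K) (hv : v ∈ cube K M) :
    r1 K (ors u v) = u := by
  rw [mem_cube] at hu hv
  funext i
  by_cases h : i < K
  · simp [r1, ors, h, hv i (Or.inl h)]
  · simp [r1, ors, h, hu i (Or.inr (by omega))]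

lemma r2_ors {N K M : ℕ} {u v : ℕ → Bool} (hu : u ∈ cube N K) (hv : v ∈ cube K M) :
    r2 K (ors u v) = v := by
  rw [mem_cube] at hu hv
  funext i
  by_cases h : K ≤ i
  · simp [r2, ors, h, hu i (Or.inr h)]
  · simp [r2, ors, h, hv i (Or.inl (by omega))]

lemma ors_mem {N K M : ℕ} (hN : N ≤ K) (hK : K ≤ M) {u v : ℕ → Bool}
    (hu : u ∈ cube N K) (hv : v ∈ cube K M) :
    ors u v ∈ cube N M := by
  rw [mem_cube] at hu hv ⊢
  intro i hi
  rcases hi with h | h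
  · simp [ors, hu i (Or.inl h), hv i (Or.inl (by omega))]
  · simp [ors, hu i (Or.inr (by omega)), hv i (Or.inr h)]

/-- key splitting: the cardinality of a set of functions on `[N,M)` is the sum over
prefixes `u` on `[N,K)` of the number of suffixes. -/
lemma card_split {N K M : ℕ} (hN : N ≤ K) (hK : K ≤ M) {W : Finset (ℕ → Bool)}
    (hW : W ⊆ cube N M) :
    W.card = ∑ u ∈ cube N K, ((cube K M).filter (fun v => ors u v ∈ W)).card := by
  rw [Finset.card_eq_sum_card_fiberwise (f := r1 K) (t := cube N K)
    (fun t ht => r1_mem hK (hW ht))]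
  refine Finset.sum_congr rfl (fun u hu => ?_)
  apply Finset.card_bij (fun t _ => r2 K t)
  · intro t ht
    simp only [Finset.mem_filter] at ht ⊢
    refine ⟨r2_mem hN (hW ht.1), ?_⟩
    rw [← ht.2, ors_r1_r2]
    exact ht.1
  · intro t ht t' ht' h
    simp only [Finset.mem_filter] at ht ht'
    rw [← ors_r1_r2 K t, ← ors_r1_r2 K t', ht.2, ht'.2, h]
  · intro v hv
    simp only [Finset.mem_filter] at hv
    exact ⟨ors u v, Finset.mem_filter.2 ⟨hv.2, r1_ors hu hv.1⟩, r2_ors hu hv.1⟩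

lemma card_forced {N M : ℕ} {B : Finset ℕ} (hB : B ⊆ Finset.Ico N M) :
    ((cube N M).filter (fun u => ∀ l ∈ B, u l = true)).card
      = 2 ^ ((M - N) - B.card) := by
  rw [show ((M - N) - B.card) = (Finset.Ico N M \ B).card by
      rw [Finset.card_sdiff_of_subset hB, Nat.card_Ico],
    ← Finset.card_powerset]
  symm
  apply Finset.card_bij (fun s _ => indik (s ∪ B))
  · intro s hs
    simp only [Finset.mem_powerset] at hs
    refine Finset.mem_filter.2 ⟨?_, ?_⟩
    · exact Finset.mem_image_of_mem _ (Finset.mem_powerset.2 (Finset.union_subset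
        (hs.trans (Finset.sdiff_subset)) hB))
    · intro l hl
      simp [indik, Finset.mem_union, hl]
  · intro s hs s' hs' h
    simp only [Finset.mem_powerset] at hs hs'
    have h2 : s ∪ B = s' ∪ B := indik_inj h
    ext i
    constructor
    · intro hi
      have : i ∈ s' ∪ B := h2 ▸ Finset.mem_union_left B hi
      rcases Finset.mem_union.1 this with h' | h'
      · exact h'
      · exact absurd h' (Finset.mem_sdiff.1 (hs hi)).2
    · intro hi
      have : i ∈ s ∪ B := h2 ▸ Finset.mem_union_left B hi
      rcases Finset.mem_union.1 this with h' | h'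
      · exact h'
      · exact absurd h' (Finset.mem_sdiff.1 (hs' hi)).2
  · intro u hu
    obtain ⟨hu1, hu2⟩ := Finset.mem_filter.1 hu
    obtain ⟨su, hsu, rfl⟩ := Finset.mem_image.1 hu1
    rw [Finset.mem_powerset] at hsu
    have hBsu : B ⊆ su := by
      intro l hl
      have := hu2 l hl
      simpa [indik] using this
    refine ⟨su \ B, Finset.mem_powerset.2 (fun i hi => ?_), ?_⟩
    · rw [Finset.mem_sdiff] at hi ⊢
      exact ⟨hsu hi.1, hi.2⟩
    · rw [Finset.sdiff_union_of_subset hBsu]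

lemma prod_lb (n : ℕ) : ∀ K, n ≤ K →
    (1:ℝ) - ((2:ℝ)^(n+1))⁻¹ + ((2:ℝ)^(K+1))⁻¹
      ≤ ∏ j ∈ Finset.Ico n K, (1 - ((2:ℝ)^(j+2))⁻¹) := by
  refine Nat.le_induction ?_ ?_
  · simp
  · intro K hK ih
    rw [Finset.prod_Ico_succ_top hK]
    have h1 : (0:ℝ) < (2:ℝ)^(n+1) := by positivity
    have h2 : (0:ℝ) < (2:ℝ)^(K+1) := by positivity
    have h3 : (0:ℝ) < (2:ℝ)^(K+2) := by positivity
    have hnK : ((2:ℝ)^(n+1))⁻¹ ≥ ((2:ℝ)^(K+1))⁻¹ := by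
      apply inv_anti₀ h1
      apply pow_le_pow_right₀ (by norm_num)
      omega
    have hA : (0:ℝ) ≤ 1 - ((2:ℝ)^(n+1))⁻¹ + ((2:ℝ)^(K+1))⁻¹ := by
      have : ((2:ℝ)^(n+1))⁻¹ ≤ 1 := by
        rw [inv_le_one_iff₀]; right; exact one_le_pow₀ (by norm_num)
      have := inv_pos.2 h2
      linarith
    have hfac : (0:ℝ) ≤ 1 - ((2:ℝ)^(K+2))⁻¹ := by
      have : ((2:ℝ)^(K+2))⁻¹ ≤ 1 := by
        rw [inv_le_one_iff₀]; right; exact one_le_pow₀ (by norm_num)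
      linarith
    calc (1:ℝ) - ((2:ℝ)^(n+1))⁻¹ + ((2:ℝ)^(K+2))⁻¹
        ≤ (1 - ((2:ℝ)^(n+1))⁻¹ + ((2:ℝ)^(K+1))⁻¹) * (1 - ((2:ℝ)^(K+2))⁻¹) := by
          have e1 : ((2:ℝ)^(K+2))⁻¹ * 2 = ((2:ℝ)^(K+1))⁻¹ := by
            rw [pow_succ]
            field_simp
          nlinarith [mul_le_mul_of_nonneg_right hnK (le_of_lt (inv_pos.2 h3))]
      _ ≤ _ := mul_le_mul_of_nonneg_right ih hfac |>.trans_eq rfl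
    
lemma prod_nat_bound {n K : ℕ} (hn : 2 ≤ n) (hK : n ≤ K) :
    7 * ∏ j ∈ Finset.Ico n K, 2^(j+2) ≤ 8 * ∏ j ∈ Finset.Ico n K, (2^(j+2) - 1) := by
  have key : (7:ℝ) * ∏ j ∈ Finset.Ico n K, (2:ℝ)^(j+2)
      ≤ 8 * ∏ j ∈ Finset.Ico n K, ((2:ℝ)^(j+2) - 1) := by
    have e : ∏ j ∈ Finset.Ico n K, ((2:ℝ)^(j+2) - 1)
        = (∏ j ∈ Finset.Ico n K, (2:ℝ)^(j+2)) * ∏ j ∈ Finset.Ico n K, (1 - ((2:ℝ)^(j+2))⁻¹) := by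
      rw [← Finset.prod_mul_distrib]
      refine Finset.prod_congr rfl (fun j _ => ?_)
      have : (0:ℝ) < (2:ℝ)^(j+2) := by positivity
      field_simp
    rw [e]
    have hQ : (0:ℝ) ≤ ∏ j ∈ Finset.Ico n K, (2:ℝ)^(j+2) :=
      Finset.prod_nonneg (fun j _ => by positivity)
    have hP : (7:ℝ)/8 ≤ ∏ j ∈ Finset.Ico n K, (1 - ((2:ℝ)^(j+2))⁻¹) := by
      refine le_trans ?_ (prod_lb n K hK)
      have h1 : ((2:ℝ)^(n+1))⁻¹ ≤ (8:ℝ)⁻¹ := by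
        apply inv_anti₀ (by norm_num)
        calc (8:ℝ) = 2^3 := by norm_num
          _ ≤ 2^(n+1) := pow_le_pow_right₀ (by norm_num) (by omega)
      have h2 : (0:ℝ) < ((2:ℝ)^(K+1))⁻¹ := by positivity
      norm_num
      linarith
    nlinarith
  have cast1 : ((∏ j ∈ Finset.Ico n K, (2^(j+2) - 1) : ℕ) : ℝ)
      = ∏ j ∈ Finset.Ico n K, ((2:ℝ)^(j+2) - 1) := by
    push_cast [Nat.one_le_two_pow]
    rfl
  have cast2 : ((∏ j ∈ Finset.Ico n K, 2^(j+2) : ℕ) : ℝ)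
      = ∏ j ∈ Finset.Ico n K, (2:ℝ)^(j+2) := by push_cast; rfl
  exact_mod_cast (by rw [Nat.cast_mul, Nat.cast_mul, cast1, cast2]; exact key :
    ((7 * ∏ j ∈ Finset.Ico n K, 2^(j+2) : ℕ) : ℝ) ≤ ((8 * ∏ j ∈ Finset.Ico n K, (2^(j+2) - 1) : ℕ) : ℝ))

lemma rec_lemma (a : ℕ → ℕ) (hmono : StrictMono a) (n m : ℕ) (hn2 : 2 ≤ n) :
    ∀ d k, k + d = m + 1 → n ≤ k → ∀ W : Finset (ℕ → Bool), W ⊆ cube (a k) (a (m+1)) →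
    4 * W.card * ∏ j ∈ Finset.Ico n k, (2^(j+2)-1)
      < 2^(a (m+1) - a k) * ∏ j ∈ Finset.Ico n k, 2^(j+2) →
    ∃ S : ℕ → Finset ℕ,
      (∀ j, k ≤ j → j ≤ m → S j ⊆ Finset.Ico (a j) (a (j+1))) ∧
      (∀ j, k ≤ j → (S j).card ≤ (j+1) * ∏ i ∈ Finset.Ico k j, 2 ^ (a (i+1) - a i)) ∧
      ∀ s : ℕ → ℕ, (∀ j, k ≤ j → j ≤ m → a j ≤ s j ∧ s j < a (j+1)) →
        (∀ j, k ≤ j → j ≤ m → s j ∉ S j) →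
        ∃ t, t ∈ cube (a k) (a (m+1)) ∧ (∀ j, k ≤ j → j ≤ m → t (s j) = false) ∧ t ∉ W := by
  intro d
  induction d with
  | zero =>
    intro k hk hnk W hW hgood
    have hkm : k = m + 1 := by omega
    subst hkm
    -- W must be empty
    have hprod : 7 * ∏ j ∈ Finset.Ico n (m+1), 2^(j+2)
        ≤ 8 * ∏ j ∈ Finset.Ico n (m+1), (2^(j+2)-1) := prod_nat_bound hn2 hnk
    have hPpos : 0 < ∏ j ∈ Finset.Ico n (m+1), (2^(j+2)-1) :=
      Finset.prod_pos (fun j _ => by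
        have : 1 < 2^(j+2) := Nat.one_lt_two_pow_iff.2 (by omega)
        omega)
    have hWzero : W.card = 0 := by
      by_contra hc
      have h1 : 1 ≤ W.card := Nat.pos_of_ne_zero hc
      rw [Nat.sub_self, pow_zero, one_mul] at hgood
      have h4 : 4 * ∏ j ∈ Finset.Ico n (m+1), (2^(j+2)-1)
          < ∏ j ∈ Finset.Ico n (m+1), 2^(j+2) := by
        refine lt_of_le_of_lt ?_ hgood
        have := Nat.mul_le_mul_right (∏ j ∈ Finset.Ico n (m+1), (2^(j+2)-1))
          (by omega : 4 ≤ 4 * W.card)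
        simpa using this
      omega
    have hWempty : W = ∅ := Finset.card_eq_zero.1 hWzero
    refine ⟨fun _ => ∅, by simp, by simp, fun s hs havoid => ?_⟩
    refine ⟨fun _ => false, ?_, by simp, by simp [hWempty]⟩
    rw [mem_cube]; intro i _; rfl
  | succ d ih =>
    intro k hk hnk W hW hgood
    have hkm : k ≤ m := by omega
    set N := a k with hN
    set K := a (k+1) with hKdef
    set M := a (m+1) with hM
    have hNK : N ≤ K := le_of_lt (hmono (by omega))
    have hKM : K ≤ M := hmono.monotone (by omega)
    set Pp1 : ℕ := ∏ j ∈ Finset.Ico n (k+1), (2^(j+2)-1) with hPp1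
    set Q1 : ℕ := ∏ j ∈ Finset.Ico n (k+1), 2^(j+2) with hQ1
    set Wu : (ℕ → Bool) → Finset (ℕ → Bool) :=
      fun u => (cube K M).filter (fun v => ors u v ∈ W) with hWu
    set GoodU : (ℕ → Bool) → Prop :=
      fun u => 4 * (Wu u).card * Pp1 < 2^(M - K) * Q1 with hGoodU
    have hSplit : W.card = ∑ u ∈ cube N K, (Wu u).card := card_split hNK hKM hW
    set B : Finset ℕ := (Finset.Ico N K).filter
      (fun l => ∀ u ∈ cube N K, u l = false → ¬ GoodU u) with hB
    -- prod identities
    have hPsplit : Pp1 = (∏ j ∈ Finset.Ico n k, (2^(j+2)-1)) * (2^(k+2)-1) :=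
      Finset.prod_Ico_succ_top hnk _
    have hQsplit : Q1 = (∏ j ∈ Finset.Ico n k, 2^(j+2)) * 2^(k+2) :=
      Finset.prod_Ico_succ_top hnk _
    have hMNK : (K - N) + (M - K) = M - N := by omega
    -- cardinality bound for B
    have hBcard : B.card ≤ k + 1 := by
      by_contra hc
      obtain ⟨B', hB'B, hB'card⟩ := Finset.exists_subset_card_eq
        (show k + 2 ≤ B.card by omega)
      have hB'Ico : B' ⊆ Finset.Ico N K := hB'B.trans (Finset.filter_subset _ _)
      have hL : k + 2 ≤ K - N := by
        have := Finset.card_le_card hB'Ico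
        rwa [hB'card, Nat.card_Ico] at this
      set Z : Finset (ℕ → Bool) := (cube N K).filter (fun u => ∀ l ∈ B', u l = true)
        with hZ
      have hZsub : Z ⊆ cube N K := Finset.filter_subset _ _
      have hZcard : Z.card = 2 ^ ((K - N) - (k+2)) := by
        rw [hZ, card_forced hB'Ico, hB'card]
      -- every u outside Z is bad
      have hbad : ∀ u ∈ cube N K \ Z, 2^(M - K) * Q1 ≤ 4 * (Wu u).card * Pp1 := by
        intro u hu
        rw [Finset.mem_sdiff, hZ, Finset.mem_filter] at hu
        obtain ⟨hu1, hu2⟩ := hu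
        have : ∃ l ∈ B', u l = false := by
          by_contra hc2
          push_neg at hc2
          exact hu2 ⟨hu1, fun l hl => by
            have := hc2 l hl
            cases h' : u l
            · exact absurd h' this
            · rfl⟩
        obtain ⟨l, hlB', hul⟩ := this
        have hlB : l ∈ B := hB'B hlB'
        rw [hB, Finset.mem_filter] at hlB
        have := hlB.2 u hu1 hul
        rw [hGoodU] at this
        omega
      -- sum bound
      have hsum : (cube N K \ Z).card * (2^(M - K) * Q1)
          ≤ ∑ u ∈ cube N K, 4 * (Wu u).card * Pp1 := by
        calc (cube N K \ Z).card * (2^(M - K) * Q1)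
            = ∑ _u ∈ cube N K \ Z, 2^(M - K) * Q1 := by
              rw [Finset.sum_const, smul_eq_mul]
          _ ≤ ∑ u ∈ cube N K \ Z, 4 * (Wu u).card * Pp1 :=
              Finset.sum_le_sum hbad
          _ ≤ ∑ u ∈ cube N K, 4 * (Wu u).card * Pp1 :=
              Finset.sum_le_sum_of_subset (Finset.sdiff_subset)
      have hsum2 : ∑ u ∈ cube N K, 4 * (Wu u).card * Pp1 = 4 * W.card * Pp1 := by
        rw [hSplit, Finset.mul_sum, Finset.sum_mul]
      have hsdcard : (cube N K \ Z).card = 2^(K-N) - 2^((K-N)-(k+2)) := by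
        rw [Finset.card_sdiff_of_subset hZsub, card_cube, hZcard]
      -- arithmetic contradiction
      have hrhs : (2^(K-N) - 2^((K-N)-(k+2))) * (2^(M - K) * Q1)
          = 2^(M-N) * (∏ j ∈ Finset.Ico n k, 2^(j+2)) * (2^(k+2)-1) := by
        have e1 : (2:ℕ)^(K-N) - 2^((K-N)-(k+2)) = 2^((K-N)-(k+2)) * (2^(k+2)-1) := by
          rw [Nat.mul_sub_left_distrib, mul_one, ← pow_add]
          congr 2
          omega
        rw [e1, hQsplit]
        have e2 : (2:ℕ)^((K-N)-(k+2)) * 2^(k+2) = 2^(K-N) := by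
          rw [← pow_add]; congr 1; omega
        calc 2^((K-N)-(k+2)) * (2^(k+2)-1) * (2^(M-K) * ((∏ j ∈ Finset.Ico n k, 2^(j+2)) * 2^(k+2)))
            = (2^((K-N)-(k+2)) * 2^(k+2)) * 2^(M-K) * (∏ j ∈ Finset.Ico n k, 2^(j+2)) * (2^(k+2)-1) := by ring
          _ = 2^(M-N) * (∏ j ∈ Finset.Ico n k, 2^(j+2)) * (2^(k+2)-1) := by
              rw [e2, ← pow_add, hMNK]
      have hfin : (2^(M-N) * ∏ j ∈ Finset.Ico n k, 2^(j+2)) * (2^(k+2)-1)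
          ≤ (4 * W.card * ∏ j ∈ Finset.Ico n k, (2^(j+2)-1)) * (2^(k+2)-1) := by
        calc (2^(M-N) * ∏ j ∈ Finset.Ico n k, 2^(j+2)) * (2^(k+2)-1)
            = 2^(M-N) * (∏ j ∈ Finset.Ico n k, 2^(j+2)) * (2^(k+2)-1) := by ring
          _ = (2^(K-N) - 2^((K-N)-(k+2))) * (2^(M - K) * Q1) := hrhs.symm
          _ = (cube N K \ Z).card * (2^(M - K) * Q1) := by rw [hsdcard]
          _ ≤ ∑ u ∈ cube N K, 4 * (Wu u).card * Pp1 := hsum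
          _ = 4 * W.card * Pp1 := hsum2
          _ = 4 * W.card * ((∏ j ∈ Finset.Ico n k, (2^(j+2)-1)) * (2^(k+2)-1)) := by
              rw [hPsplit]
          _ = (4 * W.card * ∏ j ∈ Finset.Ico n k, (2^(j+2)-1)) * (2^(k+2)-1) := by
              ring
      have hpos : 0 < (2:ℕ)^(k+2) - 1 := by
        have : 1 < 2^(k+2) := Nat.one_lt_two_pow_iff.2 (by omega)
        omega
      have := Nat.le_of_mul_le_mul_right hfin hpos
      exact absurd hgood (not_lt.2 this)
    -- the IH applied to good u's
    have ihall : ∀ u, u ∈ cube N K → GoodU u →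
        ∃ S : ℕ → Finset ℕ,
          (∀ j, k+1 ≤ j → j ≤ m → S j ⊆ Finset.Ico (a j) (a (j+1))) ∧
          (∀ j, k+1 ≤ j → (S j).card ≤ (j+1) * ∏ i ∈ Finset.Ico (k+1) j, 2 ^ (a (i+1) - a i)) ∧
          ∀ s : ℕ → ℕ, (∀ j, k+1 ≤ j → j ≤ m → a j ≤ s j ∧ s j < a (j+1)) →
            (∀ j, k+1 ≤ j → j ≤ m → s j ∉ S j) →
            ∃ t, t ∈ cube (a (k+1)) (a (m+1)) ∧ (∀ j, k+1 ≤ j → j ≤ m → t (s j) = false)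
              ∧ t ∉ Wu u := by
      intro u hu hgu
      exact ih (k+1) (by omega) (by omega) (Wu u) (Finset.filter_subset _ _) hgu
    set F : (ℕ → Bool) → (ℕ → Finset ℕ) := fun u =>
      if h : u ∈ cube N K ∧ GoodU u then (ihall u h.1 h.2).choose else fun _ => ∅
      with hF
    have hFspec : ∀ u (h1 : u ∈ cube N K) (h2 : GoodU u),
        (∀ j, k+1 ≤ j → j ≤ m → F u j ⊆ Finset.Ico (a j) (a (j+1))) ∧
        (∀ j, k+1 ≤ j → (F u j).card ≤ (j+1) * ∏ i ∈ Finset.Ico (k+1) j, 2 ^ (a (i+1) - a i)) ∧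
        ∀ s : ℕ → ℕ, (∀ j, k+1 ≤ j → j ≤ m → a j ≤ s j ∧ s j < a (j+1)) →
          (∀ j, k+1 ≤ j → j ≤ m → s j ∉ F u j) →
          ∃ t, t ∈ cube (a (k+1)) (a (m+1)) ∧ (∀ j, k+1 ≤ j → j ≤ m → t (s j) = false)
            ∧ t ∉ Wu u := by
      intro u h1 h2
      rw [hF]
      simp only [dif_pos (And.intro h1 h2)]
      exact (ihall u h1 h2).choose_spec
    refine ⟨fun j => if j = k then B else (cube N K).biUnion (fun u => F u j), ?_, ?_, ?_⟩
    · -- subsets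
      intro j hkj hjm l hl
      by_cases hjk : j = k
      · subst hjk
        simp only [if_pos rfl] at hl
        exact (Finset.filter_subset _ _) hl
      · simp only [if_neg hjk] at hl
        obtain ⟨u, hu, hlu⟩ := Finset.mem_biUnion.1 hl
        by_cases h : u ∈ cube N K ∧ GoodU u
        · exact (hFspec u h.1 h.2).1 j (by omega) hjm hlu
        · rw [hF] at hlu; simp only [dif_neg h] at hlu; exact absurd hlu (Finset.notMem_empty l)
    · -- cardinality bounds
      intro j hkj
      by_cases hjk : j = k
      · subst hjk
        simp only [if_pos rfl, Finset.Ico_self, Finset.prod_empty, mul_one]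
        exact hBcard
      · have hkj' : k + 1 ≤ j := by omega
        simp only [if_neg hjk]
        calc ((cube N K).biUnion (fun u => F u j)).card
            ≤ ∑ u ∈ cube N K, (F u j).card := Finset.card_biUnion_le
          _ ≤ ∑ _u ∈ cube N K, (j+1) * ∏ i ∈ Finset.Ico (k+1) j, 2 ^ (a (i+1) - a i) := by
              refine Finset.sum_le_sum (fun u hu => ?_)
              by_cases h : u ∈ cube N K ∧ GoodU u
              · exact (hFspec u h.1 h.2).2.1 j hkj'
              · rw [hF]; simp only [dif_neg h, Finset.card_empty]; positivity
          _ = 2^(K-N) * ((j+1) * ∏ i ∈ Finset.Ico (k+1) j, 2 ^ (a (i+1) - a i)) := by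
              rw [Finset.sum_const, smul_eq_mul, card_cube]
          _ = (j+1) * ∏ i ∈ Finset.Ico k j, 2 ^ (a (i+1) - a i) := by
              rw [Finset.prod_eq_prod_Ico_succ_bot (by omega : k < j)]
              ring
    · -- covering
      intro s hs havoid
      have hsk := hs k le_rfl hkm
      have hskB : s k ∉ B := by
        have := havoid k le_rfl hkm
        simpa only [if_pos rfl, if_true] using this
      have : ∃ u ∈ cube N K, u (s k) = false ∧ GoodU u := by
        by_contra hc
        push_neg at hc
        refine hskB ?_
        rw [hB, Finset.mem_filter]
        exact ⟨Finset.mem_Ico.2 hsk, fun u hu huf => hc u hu huf⟩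
      obtain ⟨u, hu, husk, hgu⟩ := this
      obtain ⟨hF1, hF2, hF3⟩ := hFspec u hu hgu
      have havoid' : ∀ j, k+1 ≤ j → j ≤ m → s j ∉ F u j := by
        intro j hj hjm hmem
        refine havoid j (by omega) hjm ?_
        simp only [if_neg (by omega : j ≠ k)]
        exact Finset.mem_biUnion.2 ⟨u, hu, hmem⟩
      obtain ⟨t', ht'c, ht'z, ht'W⟩ := hF3 s (fun j hj hjm => hs j (by omega) hjm) havoid'
      refine ⟨ors u t', ors_mem hNK hKM hu ht'c, ?_, ?_⟩
      · intro j hkj hjm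
        rcases Nat.eq_or_lt_of_le hkj with h | h
        · subst h
          have ht'sk : t' (s k) = false :=
            mem_cube.1 ht'c (s k) (Or.inl hsk.2)
          simp [ors, husk, ht'sk]
        · have hu0 : u (s j) = false := by
            refine mem_cube.1 hu (s j) (Or.inr ?_)
            exact le_trans (hmono.monotone h) (hs j (by omega) hjm).1
          have ht'0 : t' (s j) = false := ht'z j h hjm
          simp [ors, hu0, ht'0]
      · intro hmem
        refine ht'W ?_
        rw [hWu]
        exact Finset.mem_filter.2 ⟨ht'c, hmem⟩


theorem exists_small_transversal_sets
    (a : ℕ → ℕ) (ha0 : a 0 = 0) (hmono : StrictMono a)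
    (hlen : ∀ j, j < a (j+1) - a j)
    (n m : ℕ) (hnm : n ≤ m) (hn2 : 2 ≤ n)
    (T : Set (ℕ → Bool))
    (hTsupp : ∀ t ∈ T, ∀ i, (i < a n ∨ a (m+1) ≤ i) → t i = false)
    (hT : (T.ncard : ℝ) / 2 ^ (a (m+1) - a n) < 1/4) :
    ∃ S : ℕ → Finset ℕ,
      (∀ k, n ≤ k → k ≤ m → ∀ l ∈ S k, a k ≤ l ∧ l < a (k+1)) ∧
      (S n).card ≤ n + 1 ∧
      (∀ k, n < k → k ≤ m →
        (S k).card ≤ (k+1) * ∏ j ∈ Finset.Ico n k, 2 ^ (a (j+1) - a j)) ∧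
      ∀ s : ℕ → ℕ, (∀ j, n ≤ j → j ≤ m → a j ≤ s j ∧ s j < a (j+1)) →
        (∀ t : ℕ → Bool, (∀ i, (i < a n ∨ a (m+1) ≤ i) → t i = false) →
          (∀ j, n ≤ j → j ≤ m → t (s j) = false) → t ∈ T) →
        ∃ k, n ≤ k ∧ k ≤ m ∧ s k ∈ S k := by

  classical
  have hTfin : T.Finite := by
    refine Set.Finite.subset (cube (a n) (a (m+1))).finite_toSet ?_
    intro t ht
    exact mem_cube.2 (hTsupp t ht)
  set Tf : Finset (ℕ → Bool) := hTfin.toFinset with hTf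
  have hTcard : T.ncard = Tf.card := Set.ncard_eq_toFinset_card _ hTfin
  have hTfsub : Tf ⊆ cube (a n) (a (m+1)) := by
    intro t ht
    rw [hTf, Set.Finite.mem_toFinset] at ht
    exact mem_cube.2 (hTsupp t ht)
  -- starting measure bound
  have hgood : 4 * Tf.card * ∏ j ∈ Finset.Ico n n, (2^(j+2)-1)
      < 2^(a (m+1) - a n) * ∏ j ∈ Finset.Ico n n, 2^(j+2) := by
    simp only [Finset.Ico_self, Finset.prod_empty, mul_one]
    have hpow : (0:ℝ) < 2 ^ (a (m+1) - a n) := by positivity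
    rw [div_lt_iff₀ hpow, hTcard] at hT
    have : (4 * Tf.card : ℝ) < 2 ^ (a (m+1) - a n) := by linarith
    exact_mod_cast this
  obtain ⟨S, hS1, hS2, hS3⟩ := rec_lemma a hmono n m hn2 (m + 1 - n) n (by omega)
    le_rfl Tf hTfsub hgood
  refine ⟨S, ?_, ?_, ?_, ?_⟩
  · intro k hk hkm l hl
    exact Finset.mem_Ico.1 (hS1 k hk hkm hl)
  · have := hS2 n le_rfl
    rwa [Finset.Ico_self, Finset.prod_empty, mul_one] at this
  · intro k hk hkm
    exact hS2 k (le_of_lt hk)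
  · intro s hs hC
    by_contra hcon
    push_neg at hcon
    have havoid : ∀ j, n ≤ j → j ≤ m → s j ∉ S j := by
      intro j hj hjm hmem
      exact hcon j hj hjm hmem
    obtain ⟨t, htc, htz, htW⟩ := hS3 s hs havoid
    have : t ∈ T := hC t (mem_cube.1 htc) htz
    exact htW (by rw [hTf, Set.Finite.mem_toFinset]; exact this)
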